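/- Let 0 < σ < 1, β ∈ ℝ, 0 < ε < 1, and let f_ε be the local regularization of f(ρ) = β ρ^σ given by f_ε(ρ) = f(ρ) for ρ ≥ ε² and f_ε(ρ) = ρ Q_ε(ρ) for 0 ≤ ρ < ε², where Q_ε(ρ) = β ε^{2σ-2} Σ_{j=0}^{3} C(j-σ, j) (1 - ρ/ε²)^j with generalized binomial coefficients C(j-σ, j). Then there is a constant C₁ depending only on σ and β such that |f_ε(ρ)| + |ρ f_ε'(ρ)| ≤ C₁ ρ^σ for all ρ ≥ 0. -/

import Mathlib

/-- Generalized binomial coefficient `binom(x, j) = x(x-1)⋯(x-j+1)/j!`. -/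
noncomputable def gbinom (x : ℝ) (j : ℕ) : ℝ :=
  (∏ i ∈ Finset.range j, (x - i)) / (Nat.factorial j)

/-- The cubic polynomial `Q_ε(ρ) = β ε^{2σ-2} Σ_{j=0}^{3} binom(j-σ, j)(1-ρ/ε²)^j`. -/
noncomputable def Qreg (σ β ε ρ : ℝ) : ℝ :=
  β * ε ^ (2 * σ - 2) *
    ∑ j ∈ Finset.range 4, gbinom ((j : ℝ) - σ) j * (1 - ρ / ε ^ 2) ^ j

/-- The local regularization `f_ε` of `f(ρ) = β ρ^σ`. -/
noncomputable def freg (σ β ε ρ : ℝ) : ℝ :=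
  if ε ^ 2 ≤ ρ then β * ρ ^ σ else ρ * Qreg σ β ε ρ

open Real Set Filter

lemma Qreg_eq (σ β ε ρ : ℝ) : Qreg σ β ε ρ =
    β * ε ^ (2*σ-2) *
      (1 + (1-σ) * (1 - ρ/ε^2) + (2-σ)*(1-σ)/2 * (1 - ρ/ε^2)^2
        + (3-σ)*(2-σ)*(1-σ)/6 * (1 - ρ/ε^2)^3) := by
  simp only [Qreg, Finset.sum_range_succ, Finset.sum_range_zero, gbinom,
    Finset.prod_range_succ, Finset.prod_range_zero, Nat.factorial]
  push_cast
  ring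

/-- Derivative of `Qreg σ β ε`. -/
noncomputable def Qd (σ β ε ρ : ℝ) : ℝ :=
  β * ε ^ (2*σ-2) * (-(1/ε^2) *
    ((1-σ) + (2-σ)*(1-σ) * (1 - ρ/ε^2) + (3-σ)*(2-σ)*(1-σ)/2 * (1 - ρ/ε^2)^2))

lemma hasDerivAt_Qreg (σ β ε ρ : ℝ) : HasDerivAt (Qreg σ β ε) (Qd σ β ε ρ) ρ := by
  have hfun : Qreg σ β ε = fun x => β * ε ^ (2*σ-2) *
      (1 + (1-σ) * (1 - x/ε^2) + (2-σ)*(1-σ)/2 * (1 - x/ε^2)^2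
        + (3-σ)*(2-σ)*(1-σ)/6 * (1 - x/ε^2)^3) := funext fun x => Qreg_eq σ β ε x
  rw [hfun]
  have h1 : HasDerivAt (fun x : ℝ => 1 - x/ε^2) (-(1/ε^2)) ρ := by
    simpa using ((hasDerivAt_id ρ).div_const (ε^2)).const_sub 1
  have h2 := ((((h1.const_mul (1-σ)).add
      ((h1.pow 2).const_mul ((2-σ)*(1-σ)/2))).add
      ((h1.pow 3).const_mul ((3-σ)*(2-σ)*(1-σ)/6))).const_add 1).const_mul
      (β * ε ^ (2*σ-2))
  exact (h2.congr_deriv (by unfold Qd; push_cast; ring)).congr_of_eventuallyEq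
    (Filter.Eventually.of_forall fun x => by simp only [Pi.add_apply, Pi.pow_apply]; ring)

lemma key_ineq {σ ε ρ : ℝ} (hσ0 : 0 < σ) (hσ1 : σ < 1) (hε : 0 < ε)
    (hρ : 0 ≤ ρ) (hρε : ρ ≤ ε^2) : ε ^ (2*σ-2) * ρ ≤ ρ ^ σ := by
  rcases eq_or_lt_of_le hρ with h | h
  · rw [← h, mul_zero, Real.zero_rpow hσ0.ne']
  · have h1 : ρ ^ (1-σ) ≤ ε ^ (2-2*σ) := by
      calc ρ ^ (1-σ) ≤ (ε^2) ^ (1-σ) := Real.rpow_le_rpow hρ hρε (by linarith)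
        _ = ε ^ (2-2*σ) := by
            rw [← Real.rpow_natCast ε 2, ← Real.rpow_mul hε.le]
            congr 1
            push_cast
            ring
    have hρσ : (0:ℝ) ≤ ρ ^ σ := Real.rpow_nonneg hρ σ
    have hE : (0:ℝ) < ε ^ (2*σ-2) := Real.rpow_pos_of_pos hε _
    calc ε ^ (2*σ-2) * ρ = ε ^ (2*σ-2) * (ρ^σ * ρ^(1-σ)) := by
          rw [← Real.rpow_add h]; norm_num
      _ ≤ ε ^ (2*σ-2) * (ρ^σ * ε^(2-2*σ)) := by
          apply mul_le_mul_of_nonneg_left _ hE.le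
          exact mul_le_mul_of_nonneg_left h1 hρσ
      _ = ρ^σ * (ε ^ (2*σ-2) * ε^(2-2*σ)) := by ring
      _ = ρ^σ := by
          rw [← Real.rpow_add hε]
          norm_num

lemma eps_pow_id {σ ε : ℝ} (hε : 0 < ε) : ε^2 * ε ^ (2*σ-2) = (ε^2) ^ σ := by
  rw [← Real.rpow_natCast ε 2, ← Real.rpow_add hε, ← Real.rpow_mul hε.le]
  congr 1
  push_cast
  ring

lemma junction_val {σ β ε : ℝ} (hε : 0 < ε) :
    ε^2 * Qreg σ β ε (ε^2) = β * (ε^2) ^ σ := by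
  have ht : 1 - ε^2/ε^2 = (0:ℝ) := by field_simp; ring
  have : ε^2 * Qreg σ β ε (ε^2) = β * (ε^2 * ε ^ (2*σ-2)) := by
    rw [Qreg_eq, ht]; ring
  rw [this, eps_pow_id hε]

lemma junction_deriv {σ β ε : ℝ} (hε : 0 < ε) :
    Qreg σ β ε (ε^2) + ε^2 * Qd σ β ε (ε^2) = β * σ * ε ^ (2*σ-2) := by
  have ht : 1 - ε^2/ε^2 = (0:ℝ) := by field_simp; ring
  have he2 : (ε:ℝ)^2 ≠ 0 := by positivity
  rw [Qreg_eq, Qd, ht]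
  field_simp
  ring

/-- `|f_ε(ρ)| + |ρ f_ε'(ρ)| ≤ C₁ ρ^σ` for all `ρ ≥ 0`, `C₁` depending only on `σ, β`. -/
theorem stmt8 (σ β : ℝ) (hσ0 : 0 < σ) (hσ1 : σ < 1) :
    ∃ C₁ : ℝ, 0 < C₁ ∧ ∀ ε : ℝ, 0 < ε → ε < 1 → ∀ ρ : ℝ, 0 ≤ ρ →
      |freg σ β ε ρ| + |ρ * deriv (freg σ β ε) ρ| ≤ C₁ * ρ ^ σ := by
  refine ⟨(|β|+1) * 20, by positivity, fun ε hε0 hε1 ρ hρ => ?_⟩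
  have he2 : (0:ℝ) < ε^2 := by positivity
  have hβ : (0:ℝ) ≤ |β| := abs_nonneg β
  have hE : (0:ℝ) < ε ^ (2*σ-2) := Real.rpow_pos_of_pos hε0 _
  rcases lt_trichotomy ρ (ε^2) with hlt | heq | hgt
  · -- ρ < ε²
    have hρσ : (0:ℝ) ≤ ρ ^ σ := Real.rpow_nonneg hρ σ
    have hev : freg σ β ε =ᶠ[nhds ρ] fun x => x * Qreg σ β ε x := by
      filter_upwards [Iio_mem_nhds hlt] with x hx
      simp [freg, not_le.mpr (mem_Iio.mp hx)]
    have hd : HasDerivAt (freg σ β ε) (Qreg σ β ε ρ + ρ * Qd σ β ε ρ) ρ := by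
      have h := (hasDerivAt_id ρ).mul (hasDerivAt_Qreg σ β ε ρ)
      simp only [id, one_mul] at h
      exact h.congr_of_eventuallyEq hev
    have hderiv : deriv (freg σ β ε) ρ = Qreg σ β ε ρ + ρ * Qd σ β ε ρ := hd.deriv
    have hval : freg σ β ε ρ = ρ * Qreg σ β ε ρ := by
      simp [freg, not_le.mpr hlt]
    -- bounds on t
    have ht0 : 0 ≤ 1 - ρ/ε^2 := by
      have : ρ/ε^2 ≤ 1 := (div_le_one he2).mpr hlt.le
      linarith
    have ht1 : 1 - ρ/ε^2 ≤ 1 := by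
      have : 0 ≤ ρ/ε^2 := div_nonneg hρ he2.le
      linarith
    set t := 1 - ρ/ε^2 with htdef
    clear_value t
    have hQ : |Qreg σ β ε ρ| ≤ |β| * (ε ^ (2*σ-2)) * 4 := by
      rw [Qreg_eq, ← htdef]
      have hs1 : (0:ℝ) ≤ 1-σ := by linarith
      have hs2 : (0:ℝ) ≤ 2-σ := by linarith
      have hs3 : (0:ℝ) ≤ 3-σ := by linarith
      have ht2 : t^2 ≤ 1 := pow_le_one₀ ht0 ht1
      have ht3 : t^3 ≤ 1 := pow_le_one₀ ht0 ht1
      have ht2' : (0:ℝ) ≤ t^2 := by positivity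
      have ht3' : (0:ℝ) ≤ t^3 := pow_nonneg ht0 3
      have hc2 : (2-σ)*(1-σ) ≤ 2 := by nlinarith
      have hc3 : (3-σ)*(2-σ)*(1-σ) ≤ 6 := by nlinarith
      have hm1 : (1-σ)*t ≤ 1*1 := mul_le_mul (by linarith) ht1 ht0 (by norm_num)
      have hm2 : (2-σ)*(1-σ)*t^2 ≤ 2*1 := mul_le_mul hc2 ht2 ht2' (by norm_num)
      have hm3 : (3-σ)*(2-σ)*(1-σ)*t^3 ≤ 6*1 := mul_le_mul hc3 ht3 ht3' (by norm_num)
      have hn1 : 0 ≤ (1-σ)*t := mul_nonneg hs1 ht0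
      have hn2 : 0 ≤ (2-σ)*(1-σ)*t^2 := mul_nonneg (mul_nonneg hs2 hs1) ht2'
      have hn3 : 0 ≤ (3-σ)*(2-σ)*(1-σ)*t^3 := mul_nonneg (mul_nonneg (mul_nonneg hs3 hs2) hs1) ht3'
      have hP0 : 0 ≤ 1 + (1-σ)*t + (2-σ)*(1-σ)/2*t^2 + (3-σ)*(2-σ)*(1-σ)/6*t^3 := by
        linarith
      have hP4 : 1 + (1-σ)*t + (2-σ)*(1-σ)/2*t^2 + (3-σ)*(2-σ)*(1-σ)/6*t^3 ≤ 4 := by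
        linarith
      calc |β * ε ^ (2*σ-2) * (1 + (1-σ)*t + (2-σ)*(1-σ)/2*t^2 + (3-σ)*(2-σ)*(1-σ)/6*t^3)|
          = |β| * ε ^ (2*σ-2) * (1 + (1-σ)*t + (2-σ)*(1-σ)/2*t^2 + (3-σ)*(2-σ)*(1-σ)/6*t^3) := by
            rw [abs_mul, abs_mul, abs_of_pos hE, abs_of_nonneg hP0]
        _ ≤ |β| * ε ^ (2*σ-2) * 4 := by
            apply mul_le_mul_of_nonneg_left hP4 (by positivity)
    have hQd : |Qd σ β ε ρ| ≤ |β| * (ε ^ (2*σ-2)) * (6/ε^2) := by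
      rw [Qd, ← htdef]
      have hs1 : (0:ℝ) ≤ 1-σ := by linarith
      have hs2 : (0:ℝ) ≤ 2-σ := by linarith
      have hs3 : (0:ℝ) ≤ 3-σ := by linarith
      have ht2 : t^2 ≤ 1 := pow_le_one₀ ht0 ht1
      have ht2' : (0:ℝ) ≤ t^2 := by positivity
      have hc2 : (2-σ)*(1-σ) ≤ 2 := by nlinarith
      have hc3 : (3-σ)*(2-σ)*(1-σ) ≤ 6 := by nlinarith
      have hm2 : (2-σ)*(1-σ)*t ≤ 2*1 := mul_le_mul hc2 ht1 ht0 (by norm_num)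
      have hm3 : (3-σ)*(2-σ)*(1-σ)*t^2 ≤ 6*1 := mul_le_mul hc3 ht2 ht2' (by norm_num)
      have hn2 : 0 ≤ (2-σ)*(1-σ)*t := mul_nonneg (mul_nonneg hs2 hs1) ht0
      have hn3 : 0 ≤ (3-σ)*(2-σ)*(1-σ)*t^2 := mul_nonneg (mul_nonneg (mul_nonneg hs3 hs2) hs1) ht2'
      have hR0 : 0 ≤ (1-σ) + (2-σ)*(1-σ)*t + (3-σ)*(2-σ)*(1-σ)/2*t^2 := by
        linarith
      have hR6 : (1-σ) + (2-σ)*(1-σ)*t + (3-σ)*(2-σ)*(1-σ)/2*t^2 ≤ 6 := by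
        linarith
      have habs : |β * ε ^ (2*σ-2) * (-(1/ε^2) *
          ((1-σ) + (2-σ)*(1-σ)*t + (3-σ)*(2-σ)*(1-σ)/2*t^2))|
          = |β| * ε ^ (2*σ-2) * ((1/ε^2) *
          ((1-σ) + (2-σ)*(1-σ)*t + (3-σ)*(2-σ)*(1-σ)/2*t^2)) := by
        rw [abs_mul, abs_mul, abs_mul, abs_of_pos hE, abs_neg,
          abs_of_pos (by positivity : (0:ℝ) < 1/ε^2), abs_of_nonneg hR0]
      rw [habs]
      have : (1/ε^2) * ((1-σ) + (2-σ)*(1-σ)*t + (3-σ)*(2-σ)*(1-σ)/2*t^2) ≤ 6/ε^2 := by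
        rw [div_eq_mul_one_div 6 (ε^2), mul_comm 6 (1/ε^2)]
        apply mul_le_mul_of_nonneg_left hR6 (by positivity)
      apply mul_le_mul_of_nonneg_left this (by positivity)
    have hk : ε ^ (2*σ-2) * ρ ≤ ρ ^ σ := key_ineq hσ0 hσ1 hε0 hρ hlt.le
    have hk2 : ε ^ (2*σ-2) * (ρ^2 / ε^2) ≤ ρ ^ σ := by
      refine le_trans ?_ hk
      apply mul_le_mul_of_nonneg_left _ hE.le
      rw [div_le_iff₀ he2]
      nlinarith
    -- assemble
    have hQρ : ρ * |Qreg σ β ε ρ| ≤ 4 * (|β| * ρ^σ) := by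
      calc ρ * |Qreg σ β ε ρ| ≤ ρ * (|β| * (ε ^ (2*σ-2)) * 4) :=
            mul_le_mul_of_nonneg_left hQ hρ
        _ = 4 * (|β| * (ε ^ (2*σ-2) * ρ)) := by ring
        _ ≤ 4 * (|β| * ρ^σ) := by
            have := mul_le_mul_of_nonneg_left hk hβ
            linarith
    have hQdρ : ρ^2 * |Qd σ β ε ρ| ≤ 6 * (|β| * ρ^σ) := by
      calc ρ^2 * |Qd σ β ε ρ| ≤ ρ^2 * (|β| * (ε ^ (2*σ-2)) * (6/ε^2)) :=
            mul_le_mul_of_nonneg_left hQd (by positivity)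
        _ = 6 * (|β| * (ε ^ (2*σ-2) * (ρ^2/ε^2))) := by ring
        _ ≤ 6 * (|β| * ρ^σ) := by
            have := mul_le_mul_of_nonneg_left hk2 hβ
            linarith
    have h1 : |freg σ β ε ρ| ≤ 4 * (|β| * ρ^σ) := by
      rw [hval, abs_mul, abs_of_nonneg hρ]
      exact hQρ
    have h2 : |ρ * deriv (freg σ β ε) ρ| ≤ 10 * (|β| * ρ^σ) := by
      rw [hderiv, abs_mul, abs_of_nonneg hρ]
      have htri : |Qreg σ β ε ρ + ρ * Qd σ β ε ρ| ≤ |Qreg σ β ε ρ| + ρ * |Qd σ β ε ρ| := by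
        calc |Qreg σ β ε ρ + ρ * Qd σ β ε ρ| ≤ |Qreg σ β ε ρ| + |ρ * Qd σ β ε ρ| :=
              abs_add_le _ _
          _ = |Qreg σ β ε ρ| + ρ * |Qd σ β ε ρ| := by rw [abs_mul, abs_of_nonneg hρ]
      calc ρ * |Qreg σ β ε ρ + ρ * Qd σ β ε ρ|
          ≤ ρ * (|Qreg σ β ε ρ| + ρ * |Qd σ β ε ρ|) :=
            mul_le_mul_of_nonneg_left htri hρ
        _ = ρ * |Qreg σ β ε ρ| + ρ^2 * |Qd σ β ε ρ| := by ring
        _ ≤ 4 * (|β| * ρ^σ) + 6 * (|β| * ρ^σ) := add_le_add hQρ hQdρ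
        _ = 10 * (|β| * ρ^σ) := by ring
    have hbρ : 0 ≤ |β| * ρ^σ := mul_nonneg hβ hρσ
    have hgoal : (|β|+1) * 20 * ρ^σ = 20 * (|β| * ρ^σ) + 20 * ρ^σ := by ring
    linarith
  · -- ρ = ε²
    subst heq
    have hρσ : (0:ℝ) ≤ (ε^2) ^ σ := Real.rpow_nonneg he2.le σ
    have hdpoly : HasDerivAt (fun x => x * Qreg σ β ε x)
        (Qreg σ β ε (ε^2) + ε^2 * Qd σ β ε (ε^2)) (ε^2) := by
      have h := (hasDerivAt_id (ε^2)).mul (hasDerivAt_Qreg σ β ε (ε^2))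
      simp only [id, one_mul] at h
      exact h
    have hdL : HasDerivWithinAt (freg σ β ε) (β * σ * ε ^ (2*σ-2)) (Iic (ε^2)) (ε^2) := by
      rw [← junction_deriv hε0]
      refine (hdpoly.hasDerivWithinAt).congr (fun y hy => ?_) ?_
      · rcases lt_or_eq_of_le (mem_Iic.mp hy) with h | h
        · simp [freg, not_le.mpr h]
        · subst h
          rw [show freg σ β ε (ε^2) = β * (ε^2)^σ from if_pos le_rfl]
          exact (junction_val hε0).symm
      · rw [show freg σ β ε (ε^2) = β * (ε^2)^σ from if_pos le_rfl]
        exact (junction_val hε0).symm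
    have hdR : HasDerivWithinAt (freg σ β ε) (β * σ * ε ^ (2*σ-2)) (Ici (ε^2)) (ε^2) := by
      have hr : HasDerivAt (fun x => β * x ^ σ) (β * (σ * (ε^2)^(σ-1))) (ε^2) :=
        (Real.hasDerivAt_rpow_const (Or.inl he2.ne')).const_mul β
      have hval : β * (σ * (ε^2)^(σ-1)) = β * σ * ε ^ (2*σ-2) := by
        rw [← Real.rpow_natCast ε 2, ← Real.rpow_mul hε0.le]
        have : ((2:ℕ):ℝ) * (σ-1) = 2*σ-2 := by push_cast; ring
        rw [this]
        ring
      rw [← hval]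
      refine (hr.hasDerivWithinAt).congr (fun y hy => ?_) ?_
      · simp [freg, mem_Ici.mp hy]
      · simp [freg]
    have hD : HasDerivAt (freg σ β ε) (β * σ * ε ^ (2*σ-2)) (ε^2) := by
      have h := hdL.union hdR
      rw [Set.Iic_union_Ici] at h
      exact hasDerivWithinAt_univ.mp h
    have hderiv : deriv (freg σ β ε) (ε^2) = β * σ * ε ^ (2*σ-2) := hD.deriv
    have hval : freg σ β ε (ε^2) = β * (ε^2) ^ σ := if_pos le_rfl
    rw [hval, hderiv]
    have hid : ε^2 * (β * σ * ε ^ (2*σ-2)) = β * σ * (ε^2)^σ := by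
      rw [← eps_pow_id hε0]; ring
    rw [hid]
    rw [abs_mul, abs_of_nonneg hρσ, abs_mul, abs_mul, abs_of_nonneg hσ0.le,
      abs_of_nonneg hρσ]
    have hbρ : 0 ≤ |β| * (ε^2)^σ := mul_nonneg hβ hρσ
    have hm : |β| * σ * (ε^2)^σ ≤ |β| * (ε^2)^σ := by
      have := mul_le_mul_of_nonneg_right (mul_le_mul_of_nonneg_left hσ1.le hβ) hρσ
      calc |β| * σ * (ε^2)^σ ≤ |β| * 1 * (ε^2)^σ := this
        _ = |β| * (ε^2)^σ := by ring
    have hgoal : (|β|+1) * 20 * (ε^2)^σ = 20 * (|β| * (ε^2)^σ) + 20 * (ε^2)^σ := by ring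
    linarith
  · -- ρ > ε²
    have hρ0 : 0 < ρ := lt_trans he2 hgt
    have hρσ : (0:ℝ) ≤ ρ ^ σ := Real.rpow_nonneg hρ σ
    have hev : freg σ β ε =ᶠ[nhds ρ] fun x => β * x ^ σ := by
      filter_upwards [Ioi_mem_nhds hgt] with x hx
      simp [freg, le_of_lt (mem_Ioi.mp hx)]
    have hd : HasDerivAt (freg σ β ε) (β * (σ * ρ^(σ-1))) ρ :=
      ((Real.hasDerivAt_rpow_const (Or.inl hρ0.ne')).const_mul β).congr_of_eventuallyEq hev
    have hderiv : deriv (freg σ β ε) ρ = β * (σ * ρ^(σ-1)) := hd.deriv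
    have hval : freg σ β ε ρ = β * ρ ^ σ := by simp [freg, hgt.le]
    rw [hval, hderiv]
    have hrr : ρ * (β * (σ * ρ^(σ-1))) = β * σ * ρ^σ := by
      have : ρ * ρ^(σ-1) = ρ^σ := by
        nth_rewrite 1 [← Real.rpow_one ρ]
        rw [← Real.rpow_add hρ0]
        norm_num
      calc ρ * (β * (σ * ρ^(σ-1))) = β * σ * (ρ * ρ^(σ-1)) := by ring
        _ = β * σ * ρ^σ := by rw [this]
    rw [hrr, abs_mul, abs_of_nonneg hρσ, abs_mul, abs_mul, abs_of_nonneg hσ0.le,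
      abs_of_nonneg hρσ]
    have hbρ : 0 ≤ |β| * ρ^σ := mul_nonneg hβ hρσ
    have hm : |β| * σ * ρ^σ ≤ |β| * ρ^σ := by
      have := mul_le_mul_of_nonneg_right (mul_le_mul_of_nonneg_left hσ1.le hβ) hρσ
      calc |β| * σ * ρ^σ ≤ |β| * 1 * ρ^σ := this
        _ = |β| * ρ^σ := by ring
    have hgoal : (|β|+1) * 20 * ρ^σ = 20 * (|β| * ρ^σ) + 20 * ρ^σ := by ring
    linarith
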